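/- Let (G, {ρ₋₁, ρ₀, ρ₁, ρ₂}) be a string group generated by involutions such that G = ⟨ρ₋₁, ρ₀⟩ × ⟨ρ₁, ρ₂⟩ (i.e. ρ₀ commutes with ρ₁). Then G is not isomorphic to a symmetric group Sₙ for n ≥ 5. -/

import Mathlib

/-- Any two elements of the closure of a set of pairwise-commuting elements commute. -/
lemma comm_mem_closure_comm {G : Type*} [Group G] {S : Set G}
    (hS : ∀ a ∈ S, ∀ b ∈ S, a * b = b * a) :
    ∀ a ∈ Subgroup.closure S, ∀ b ∈ Subgroup.closure S, a * b = b * a := by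
  intro a ha b hb
  induction ha, hb using Subgroup.closure_induction₂ with
  | mem x y hx hy => exact hS x hx y hy
  | one_left x hx => simp
  | one_right x hx => simp
  | mul_left x y z hx hy hz h1 h2 => exact Commute.mul_left h1 h2
  | mul_right y z x hy hz hx h1 h2 => exact Commute.mul_right h1 h2
  | inv_left x y hx hy h => exact Commute.inv_left h
  | inv_right x y hx hy h => exact Commute.inv_right h

/-- A group generated by a set of pairwise-commuting elements is commutative. -/
lemma comm_of_closure_comm {G : Type*} [Group G] {S : Set G}
    (hgen : Subgroup.closure S = ⊤)
    (hS : ∀ a ∈ S, ∀ b ∈ S, a * b = b * a) :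
    ∀ a b : G, a * b = b * a := fun a b =>
  comm_mem_closure_comm hS a (hgen ▸ Subgroup.mem_top a) b (hgen ▸ Subgroup.mem_top b)

lemma conj_left_invol {G : Type*} [Group G] {a b : G} (ha : a * a = 1) :
    a * (a * b) * a⁻¹ = b * a := by
  have hai : a⁻¹ = a := inv_eq_of_mul_eq_one_left ha
  rw [hai, show a * (a * b) * a = a * a * (b * a) by group, ha, one_mul]

lemma conj_right_invol {G : Type*} [Group G] {a b : G} (hb : b * b = 1) :
    b * (a * b) * b⁻¹ = b * a := by
  rw [show b * (a * b) * b⁻¹ = b * a * (b * b⁻¹) by group, mul_inv_cancel, mul_one]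

lemma conj_of_commute {G : Type*} [Group G] {g c : G} (h : Commute g c) :
    g * c * g⁻¹ = c := by
  rw [h.eq, mul_assoc, mul_inv_cancel, mul_one]

theorem direct_product_dihedrals_not_symmetric {G : Type*} [Group G]
    (ρneg ρ₀ ρ₁ ρ₂ : G)
    (hm1 : ρneg ^ 2 = 1) (h0 : ρ₀ ^ 2 = 1) (h1 : ρ₁ ^ 2 = 1) (h2 : ρ₂ ^ 2 = 1)
    (hgen : Subgroup.closure ({ρneg, ρ₀, ρ₁, ρ₂} : Set G) = ⊤)
    (hc1 : Commute ρneg ρ₁) (hc2 : Commute ρneg ρ₂)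
    (hc3 : Commute ρ₀ ρ₂) (hc4 : Commute ρ₀ ρ₁) :
    ∀ n : ℕ, 5 ≤ n → IsEmpty (G ≃* Equiv.Perm (Fin n)) := by
  set x := ρneg with hxdef
  set y := ρ₀ with hydef
  set z := ρ₁ with hzdef
  set w := ρ₂ with hwdef
  have hx2 : x * x = 1 := by rw [← sq]; exact hm1
  have hy2 : y * y = 1 := by rw [← sq]; exact h0
  have hz2 : z * z = 1 := by rw [← sq]; exact h1
  have hw2 : w * w = 1 := by rw [← sq]; exact h2
  have hxi : x⁻¹ = x := inv_eq_of_mul_eq_one_left hx2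
  have hyi : y⁻¹ = y := inv_eq_of_mul_eq_one_left hy2
  have hzi : z⁻¹ = z := inv_eq_of_mul_eq_one_left hz2
  have hwi : w⁻¹ = w := inv_eq_of_mul_eq_one_left hw2
  set c₁ := x * y with hc₁def
  set c₂ := z * w with hc₂def
  set H : Subgroup G := Subgroup.closure {c₁, c₂} with hHdef
  have hc₁mem : c₁ ∈ H := Subgroup.subset_closure (by simp)
  have hc₂mem : c₂ ∈ H := Subgroup.subset_closure (by simp)
  have hc₁i : c₁⁻¹ = y * x := by rw [hc₁def, mul_inv_rev, hxi, hyi]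
  have hc₂i : c₂⁻¹ = w * z := by rw [hc₂def, mul_inv_rev, hzi, hwi]
  -- conjugation of the generators of H by the generators of G stays in H
  have hxc₂ : Commute x c₂ := hc1.mul_right hc2
  have hyc₂ : Commute y c₂ := hc4.mul_right hc3
  have hzc₁ : Commute z c₁ := hc1.symm.mul_right hc4.symm
  have hwc₁ : Commute w c₁ := hc2.symm.mul_right hc3.symm
  have key : ∀ g ∈ ({x, y, z, w} : Set G), g * c₁ * g⁻¹ ∈ H ∧ g * c₂ * g⁻¹ ∈ H := by
    intro g hg
    rcases hg with rfl | rfl | rfl | rfl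
    · exact ⟨by rw [hc₁def, conj_left_invol hx2, ← hc₁i]; exact inv_mem hc₁mem,
        by rw [conj_of_commute hxc₂]; exact hc₂mem⟩
    · exact ⟨by rw [hc₁def, conj_right_invol hy2, ← hc₁i]; exact inv_mem hc₁mem,
        by rw [conj_of_commute hyc₂]; exact hc₂mem⟩
    · exact ⟨by rw [conj_of_commute hzc₁]; exact hc₁mem,
        by rw [hc₂def, conj_left_invol hz2, ← hc₂i]; exact inv_mem hc₂mem⟩
    · exact ⟨by rw [conj_of_commute hwc₁]; exact hc₁mem,
        by rw [hc₂def, conj_right_invol hw2, ← hc₂i]; exact inv_mem hc₂mem⟩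
  -- H is normal
  have hnorm : H.Normal := by
    rw [← Subgroup.normalizer_eq_top_iff, eq_top_iff, ← hgen, Subgroup.closure_le]
    intro g hg
    have hgi : g⁻¹ = g := by rcases hg with rfl | rfl | rfl | rfl; exacts [hxi, hyi, hzi, hwi]
    have hg2 : g * g = 1 := by rcases hg with rfl | rfl | rfl | rfl; exacts [hx2, hy2, hz2, hw2]
    have hsub : ∀ h ∈ H, g * h * g⁻¹ ∈ H := by
      intro h hh
      have hmap : H.map (MulAut.conj g).toMonoidHom ≤ H := by
        rw [hHdef, MonoidHom.map_closure, Subgroup.closure_le]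
        rintro _ ⟨a, (rfl | rfl), rfl⟩
        · exact (key g hg).1
        · exact (key g hg).2
      exact hmap ⟨h, hh, rfl⟩
    rw [SetLike.mem_coe, Subgroup.mem_normalizer_iff]
    intro h
    constructor
    · exact hsub h
    · intro hh
      have h2 := hsub _ hh
      have e : g * (g * h * g⁻¹) * g⁻¹ = h := by
        rw [hgi, show g * (g * h * g) * g = g * g * (h * (g * g)) by group, hg2, one_mul, mul_one]
      exact e ▸ h2
  haveI := hnorm
  -- H is commutative, hence solvable
  have hc₁c₂ : c₁ * c₂ = c₂ * c₁ :=
    (hxc₂.mul_left hyc₂).eq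
  have hScomm : ∀ a ∈ ({c₁, c₂} : Set G), ∀ b ∈ ({c₁, c₂} : Set G), a * b = b * a := by
    rintro a (rfl | rfl) b (rfl | rfl)
    exacts [rfl, hc₁c₂, hc₁c₂.symm, rfl]
  haveI : Group.IsSolvable H := isSolvable_of_comm fun a b =>
    Subtype.ext (comm_mem_closure_comm hScomm a.1 a.2 b.1 b.2)
  -- G/H is commutative, hence solvable
  haveI : Group.IsSolvable (G ⧸ H) := by
    apply isSolvable_of_comm
    apply comm_of_closure_comm
      (S := (QuotientGroup.mk' H) '' ({x, y, z, w} : Set G))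
    · rw [← MonoidHom.map_closure, hgen, ← MonoidHom.range_eq_map]
      exact MonoidHom.range_eq_top_of_surjective _ (QuotientGroup.mk'_surjective H)
    · rintro _ ⟨a, ha, rfl⟩ _ ⟨b, hb, rfl⟩
      rw [← map_mul, ← map_mul, QuotientGroup.mk'_apply, QuotientGroup.mk'_apply,
        QuotientGroup.eq]
      -- need (a*b)⁻¹ * (b*a) ∈ H for a, b generators
      rcases ha with rfl | rfl | rfl | rfl <;> rcases hb with rfl | rfl | rfl | rfl
      · rw [inv_mul_cancel]; exact one_mem H
      · rw [show (x * y)⁻¹ * (y * x) = c₁⁻¹ * c₁⁻¹ by rw [hc₁i]]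
        exact mul_mem (inv_mem hc₁mem) (inv_mem hc₁mem)
      · rw [hc1.eq, inv_mul_cancel]; exact one_mem H
      · rw [hc2.eq, inv_mul_cancel]; exact one_mem H
      · rw [show (y * x)⁻¹ * (x * y) = c₁ * c₁ by rw [hc₁def, mul_inv_rev, hxi, hyi]]
        exact mul_mem hc₁mem hc₁mem
      · rw [inv_mul_cancel]; exact one_mem H
      · rw [hc4.eq, inv_mul_cancel]; exact one_mem H
      · rw [hc3.eq, inv_mul_cancel]; exact one_mem H
      · rw [hc1.symm.eq, inv_mul_cancel]; exact one_mem H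
      · rw [hc4.symm.eq, inv_mul_cancel]; exact one_mem H
      · rw [inv_mul_cancel]; exact one_mem H
      · rw [show (z * w)⁻¹ * (w * z) = c₂⁻¹ * c₂⁻¹ by rw [hc₂i]]
        exact mul_mem (inv_mem hc₂mem) (inv_mem hc₂mem)
      · rw [hc2.symm.eq, inv_mul_cancel]; exact one_mem H
      · rw [hc3.symm.eq, inv_mul_cancel]; exact one_mem H
      · rw [show (w * z)⁻¹ * (z * w) = c₂ * c₂ by rw [hc₂def, mul_inv_rev, hzi, hwi]]
        exact mul_mem hc₂mem hc₂mem
      · rw [inv_mul_cancel]; exact one_mem H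
  -- hence G is solvable
  haveI hGsolv : Group.IsSolvable G :=
    solvable_of_ker_le_range H.subtype (QuotientGroup.mk' H)
      (by rw [QuotientGroup.ker_mk', Subgroup.range_subtype])
  -- but Sₙ is not solvable for n ≥ 5
  intro n hn
  constructor
  intro e
  refine Equiv.Perm.not_solvable (Fin n) ?_ (solvable_of_surjective (f := e.toMonoidHom) e.surjective)
  rw [Cardinal.mk_fin]
  exact_mod_cast hn
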